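/- Let K be a finite field of characteristic 2 and (V,Q) an anisotropic non-degenerate quadratic K-space (with trivial group action). Then dim_K V ≤ 2, and if dim_K V = 2 then (V,Q) is isometric to the norm form N(K) of the quadratic field extension of K; in particular the Witt group WQ(K) of quadratic forms over K has order 2. -/

import Mathlib

open QuadraticMap Polynomial Module

set_option linter.unusedSectionVars false
set_option maxHeartbeats 1000000

/-- `Q` is non-degenerate: the radical of its polarization is zero. -/
def QNondeg {K V : Type*} [Field K] [AddCommGroup V] [Module K V]
    (Q : QuadraticForm K V) : Prop :=
  LinearMap.BilinForm.Nondegenerate Q.polarBilin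



section AS
variable {K : Type*} [Field K] [CharP K 2]

/-- The Artin–Schreier additive homomorphism `t ↦ t*t + t`. -/
def asHom (K : Type*) [Field K] [CharP K 2] : K →+ K :=
  AddMonoidHom.mk' (fun t => t * t + t) (by
    intro a b
    have h2 : (2 : K) = 0 := CharTwo.two_eq_zero
    linear_combination (a * b) * h2)

lemma asHom_apply (t : K) : asHom K t = t * t + t := rfl

lemma as_ker_iff (t : K) : t * t + t = 0 ↔ t = 0 ∨ t = 1 := by
  constructor
  · intro h
    have h' : t * (t + 1) = 0 := by ring_nf; linear_combination h
    rcases mul_eq_zero.mp h' with h1 | h1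
    · exact Or.inl h1
    · right
      have := eq_neg_of_add_eq_zero_left h1
      rw [this, CharTwo.neg_eq]
  · rintro (rfl | rfl) <;> simp [CharTwo.add_self_eq_zero]

variable [Fintype K]

lemma card_as_ker : Nat.card (asHom K).ker = 2 := by
  have hset : ((asHom K).ker : Set K) = {0, 1} := by
    ext t
    simp [AddMonoidHom.mem_ker, asHom_apply, as_ker_iff, Set.mem_insert_iff]
  have : Nat.card (asHom K).ker = Nat.card ({0, 1} : Set K) :=
    Nat.card_congr (Equiv.setCongr hset)
  rw [this, Nat.card_coe_set_eq, Set.ncard_pair (zero_ne_one)]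

lemma as_key {α β : K} (hα : ∀ t : K, t * t + t ≠ α) (hβ : ∀ t : K, t * t + t ≠ β) :
    ∃ t : K, t * t + t = α + β := by
  set φ := asHom K with hφ
  have h1 : Nat.card K = Nat.card (K ⧸ φ.range) * Nat.card φ.range :=
    AddSubgroup.card_eq_card_quotient_mul_card_addSubgroup _
  have h2 : Nat.card K = Nat.card (K ⧸ φ.ker) * Nat.card φ.ker :=
    AddSubgroup.card_eq_card_quotient_mul_card_addSubgroup _
  have h3 : Nat.card φ.range = Nat.card (K ⧸ φ.ker) :=
    (Nat.card_congr (QuotientAddGroup.quotientKerEquivRange φ).toEquiv).symm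
  have hker : Nat.card φ.ker = 2 := card_as_ker
  have hpos : 0 < Nat.card φ.range := Nat.card_pos
  have hq : Nat.card (K ⧸ φ.range) = 2 := by
    have h4 : Nat.card (K ⧸ φ.range) * Nat.card φ.range = Nat.card φ.range * 2 := by
      rw [← h1, h2, hker, h3, mul_comm]
    have := Nat.eq_of_mul_eq_mul_left hpos (by linarith [h4] : Nat.card φ.range * Nat.card (K ⧸ φ.range) = Nat.card φ.range * 2)
    exact this
  have hmemα : (QuotientAddGroup.mk α : K ⧸ φ.range) ≠ 0 := by
    rw [Ne, QuotientAddGroup.eq_zero_iff]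
    rintro ⟨t, ht⟩
    exact hα t ht
  have hmemβ : (QuotientAddGroup.mk β : K ⧸ φ.range) ≠ 0 := by
    rw [Ne, QuotientAddGroup.eq_zero_iff]
    rintro ⟨t, ht⟩
    exact hβ t ht
  obtain ⟨y, -, hy⟩ := (Nat.card_eq_two_iff' (0 : K ⧸ φ.range)).mp hq
  have heq : (QuotientAddGroup.mk α : K ⧸ φ.range) = QuotientAddGroup.mk β := by
    rw [hy _ hmemα, hy _ hmemβ]
  have : α - β ∈ φ.range := (QuotientAddGroup.eq_iff_sub_mem).mp heq
  rw [sub_eq_add_neg, CharTwo.neg_eq] at this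
  obtain ⟨t, ht⟩ := this
  exact ⟨t, ht⟩

lemma as_exists : ∃ α : K, ∀ t : K, t * t + t ≠ α := by
  by_contra h
  push_neg at h
  have hsurj : Function.Surjective (fun t : K => t * t + t) := fun a => h a
  have hinj := (Finite.injective_iff_surjective).mpr hsurj
  have h01 : (1 : K) = 0 := hinj (by simp [CharTwo.add_self_eq_zero])
  exact one_ne_zero h01

end AS



lemma vec_add_self (K : Type*) {V : Type*} [Field K] [CharP K 2] [AddCommGroup V]
    [Module K V] (v : V) : v + v = 0 := by
  rw [← two_smul K v, CharTwo.two_eq_zero, zero_smul]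

lemma vec_neg_eq (K : Type*) {V : Type*} [Field K] [CharP K 2] [AddCommGroup V]
    [Module K V] (v : V) : -v = v := by
  rw [neg_eq_iff_add_eq_zero, vec_add_self K]

section Quad
variable {K : Type*} [Field K] [CharP K 2]
variable {V : Type*} [AddCommGroup V] [Module K V]

lemma polar_self_zero (Q : QuadraticForm K V) (v : V) : polar Q v v = 0 := by
  rw [polar, vec_add_self K, QuadraticMap.map_zero, sub_sub,
    CharTwo.add_self_eq_zero, sub_zero]

lemma quad_eval (Q : QuadraticForm K V) (f e : V) (a b : K) :
    Q (a • f + b • e) = a * a * Q f + b * b * Q e + a * b * polar Q f e := by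
  have h := QuadraticMap.map_add (⇑Q) (a • f) (b • e)
  rw [h, QuadraticMap.map_smul, QuadraticMap.map_smul, polar_smul_left, polar_smul_right]
  simp only [smul_eq_mul]
  ring

/-- From `e` with `polar Q e f = 1` we get a basis `(f, e)` in dimension 2. -/
lemma make_basis [FiniteDimensional K V] (hdim : finrank K V = 2)
    (Q : QuadraticForm K V) {e f : V} (he : e ≠ 0) (hp : polar Q e f = 1) :
    ∃ b : Basis (Fin 2) K V, b 0 = f ∧ b 1 = e := by
  have hli : LinearIndependent K ![f, e] := by
    rw [linearIndependent_fin2]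
    refine ⟨by simpa using he, fun a ha => ?_⟩
    simp only [Matrix.cons_val_one, Matrix.head_cons, Matrix.cons_val_zero] at ha
    have : polar Q e f = a * polar Q e e := by
      rw [← ha, polar_smul_right, smul_eq_mul]
    rw [polar_self_zero, mul_zero, hp] at this
    exact one_ne_zero this
  refine ⟨basisOfLinearIndependentOfCardEqFinrank hli (by simp [hdim]), ?_, ?_⟩ <;>
    rw [coe_basisOfLinearIndependentOfCardEqFinrank] <;> simp

variable [Fintype K]

lemma dim_le_two (h2 : ringChar K = 2) [FiniteDimensional K V] (Q : QuadraticForm K V)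
    (han : ∀ v, Q v = 0 → v = 0) : finrank K V ≤ 2 := by
  by_contra hlt
  push_neg at hlt
  have hnt : Nontrivial V := by
    apply Module.nontrivial_of_finrank_pos (R := K); omega
  obtain ⟨u, hu⟩ := exists_ne (0 : V)
  have hQu : Q u ≠ 0 := fun h => hu (han u h)
  set ℓ : V →ₗ[K] K := Q.polarBilin u with hℓ
  have hker : 2 ≤ finrank K (LinearMap.ker ℓ) := by
    have h1 := LinearMap.finrank_range_add_finrank_ker ℓ
    have h2' : finrank K (LinearMap.range ℓ) ≤ 1 := by
      simpa using (LinearMap.range ℓ).finrank_le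
    omega
  have hnle : ¬ (LinearMap.ker ℓ ≤ K ∙ u) := by
    intro hle
    have := Submodule.finrank_mono hle
    rw [finrank_span_singleton hu] at this
    omega
  obtain ⟨w, hwk, hwn⟩ := SetLike.not_le_iff_exists.mp hnle
  have hw : w ≠ 0 := fun h => hwn (h ▸ Submodule.zero_mem _)
  have hQw : Q w ≠ 0 := fun h => hw (han w h)
  obtain ⟨s, hs⟩ := FiniteField.isSquare_of_char_two h2 (Q w / Q u)
  have hpo : polar Q u w = 0 := hwk
  have hx : s • u + w ≠ 0 := by
    intro h
    apply hwn
    have : w = (-s) • u := by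
      rw [neg_smul]
      exact eq_neg_of_add_eq_zero_right h
    exact Submodule.mem_span_singleton.mpr ⟨-s, this.symm⟩
  have hQx : Q (s • u + w) = 0 := by
    have : Q (s • u + w) = s * s * Q u + Q w + s * polar Q u w := by
      have := quad_eval Q u w s 1
      simpa using this
    rw [this, hpo, ← hs, mul_zero, add_zero, div_mul_cancel₀ _ hQu,
      CharTwo.add_self_eq_zero]
  exact hx (han _ hQx)

end Quad

section Quad2
variable {K : Type*} [Field K] [CharP K 2]
variable {V : Type*} [AddCommGroup V] [Module K V]


lemma dim_ne_one [FiniteDimensional K V] (Q : QuadraticForm K V)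
    (hnd : LinearMap.BilinForm.Nondegenerate Q.polarBilin) : finrank K V ≠ 1 := by
  intro h1
  have hnt : Nontrivial V := by
    apply Module.nontrivial_of_finrank_pos (R := K); omega
  obtain ⟨u, hu⟩ := exists_ne (0 : V)
  apply hu
  apply hnd.1 u
  intro w
  have hsp : Submodule.span K {u} = ⊤ := (finrank_eq_one_iff_of_nonzero u hu).mp h1
  have hw : w ∈ Submodule.span K ({u} : Set V) := hsp ▸ Submodule.mem_top
  obtain ⟨c, rfl⟩ := Submodule.mem_span_singleton.mp hw
  show polar Q u (c • u) = 0
  rw [polar_smul_right, polar_self_zero, smul_zero]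

variable [Fintype K]

lemma exists_normal_basis (h2 : ringChar K = 2) [FiniteDimensional K V]
    (Q : QuadraticForm K V) (hnd : LinearMap.BilinForm.Nondegenerate Q.polarBilin)
    (han : ∀ v, Q v = 0 → v = 0) (hdim : finrank K V = 2) :
    ∃ (α : K) (b : Basis (Fin 2) K V), (∀ t : K, t * t + t ≠ α) ∧
      Q (b 0) = α ∧ Q (b 1) = 1 ∧ polar Q (b 1) (b 0) = 1 := by
  have hnt : Nontrivial V := by
    apply Module.nontrivial_of_finrank_pos (R := K); omega
  obtain ⟨v, hv⟩ := exists_ne (0 : V)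
  have hQv : Q v ≠ 0 := fun h => hv (han v h)
  obtain ⟨s, hs⟩ := FiniteField.isSquare_of_char_two h2 (Q v)⁻¹
  set e := s • v with he'
  have hQe : Q e = 1 := by
    rw [he', QuadraticMap.map_smul, smul_eq_mul, ← hs, inv_mul_cancel₀ hQv]
  have he : e ≠ 0 := fun h => by rw [h, QuadraticMap.map_zero] at hQe; exact zero_ne_one hQe
  have hex : ∃ n, polar Q e n ≠ 0 := by
    by_contra hcon
    push_neg at hcon
    exact he (hnd.1 e fun n => hcon n)
  obtain ⟨n, hn⟩ := hex
  set f := (polar Q e n)⁻¹ • n with hf'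
  have hpf : polar Q e f = 1 := by
    rw [hf', polar_smul_right, smul_eq_mul, inv_mul_cancel₀ hn]
  obtain ⟨b, hb0, hb1⟩ := make_basis hdim Q he hpf
  refine ⟨Q f, b, ?_, by rw [hb0], by rw [hb1, hQe], by rw [hb0, hb1, hpf]⟩
  intro t ht
  have hx : t • e + f ≠ 0 := by
    intro h
    have : f = t • e := by
      have := eq_neg_of_add_eq_zero_right h
      rwa [vec_neg_eq K] at this
    rw [this, polar_smul_right, polar_self_zero, smul_zero] at hpf
    exact zero_ne_one hpf
  apply hx
  apply han
  have : Q (t • e + (1 : K) • f) = t * t * Q e + 1 * 1 * Q f + t * 1 * polar Q e f :=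
    quad_eval Q e f t 1
  rw [one_smul] at this
  rw [this, hQe, hpf]
  have h2K : (2 : K) = 0 := CharTwo.two_eq_zero
  linear_combination ht + (Q f) * h2K

end Quad2

lemma polarBilin_isRefl' {K M : Type*} [Field K] [AddCommGroup M] [Module K M]
    (Q : QuadraticForm K M) : LinearMap.IsRefl Q.polarBilin := by
  intro x y h
  simp only [QuadraticMap.polarBilin_apply_apply] at h ⊢
  rw [QuadraticMap.polar_comm]
  exact h

/-- The norm form `α x² + y² + x y` on `K × K`. -/
noncomputable def normQ (K : Type*) [Field K] (α : K) : QuadraticForm K (K × K) :=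
  α • QuadraticMap.linMulLin (LinearMap.fst K K K) (LinearMap.fst K K K)
    + QuadraticMap.linMulLin (LinearMap.snd K K K) (LinearMap.snd K K K)
    + QuadraticMap.linMulLin (LinearMap.fst K K K) (LinearMap.snd K K K)

lemma normQ_apply {K : Type*} [Field K] (α : K) (v : K × K) :
    normQ K α v = α * (v.1 * v.1) + v.2 * v.2 + v.1 * v.2 := by
  simp [normQ, QuadraticMap.linMulLin_apply, smul_eq_mul, mul_assoc]

section NQ
variable {K : Type*} [Field K] [CharP K 2]

lemma normQ_nondeg (α : K) : LinearMap.BilinForm.Nondegenerate (normQ K α).polarBilin := by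
  refine (LinearMap.IsRefl.nondegenerate_iff_separatingLeft (polarBilin_isRefl' _)).mpr ?_
  intro u h
  have h2K : (2 : K) = 0 := CharTwo.two_eq_zero
  have h1 := h (1, 0)
  have h2 := h (0, 1)
  simp only [polarBilin_apply_apply, polar, normQ_apply, Prod.fst_add, Prod.snd_add] at h1 h2
  have hu2 : u.2 = 0 := by
    linear_combination h1 - (α * u.1) * h2K
  have hu1 : u.1 = 0 := by
    linear_combination h2 - u.2 * h2K
  exact Prod.ext hu1 hu2

lemma normQ_aniso (α : K) (hα : ∀ t : K, t * t + t ≠ α) :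
    ∀ v : K × K, normQ K α v = 0 → v = 0 := by
  intro v hv
  have h2K : (2 : K) = 0 := CharTwo.two_eq_zero
  rw [normQ_apply] at hv
  by_cases h1 : v.1 = 0
  · have : v.2 * v.2 = 0 := by rw [h1] at hv; linear_combination hv
    have h2 : v.2 = 0 := by
      rcases mul_eq_zero.mp this with h | h <;> exact h
    exact Prod.ext h1 h2
  · exfalso
    apply hα (v.2 / v.1)
    field_simp
    linear_combination hv - α * (v.1 * v.1) * h2K

end NQ

lemma nondeg_comp {K M W : Type*} [Field K] [AddCommGroup M] [Module K M]
    [AddCommGroup W] [Module K W] (Q : QuadraticForm K M)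
    (hQ : LinearMap.BilinForm.Nondegenerate Q.polarBilin) (e : W ≃ₗ[K] M) :
    LinearMap.BilinForm.Nondegenerate (Q.comp (e : W →ₗ[K] M)).polarBilin := by
  refine (LinearMap.IsRefl.nondegenerate_iff_separatingLeft (polarBilin_isRefl' _)).mpr ?_
  intro u h
  have key : ∀ n : M, QuadraticMap.polar Q (e u) n = 0 := by
    intro n
    have hn := h (e.symm n)
    simp only [QuadraticMap.polarBilin_apply_apply, QuadraticMap.polar,
      QuadraticMap.comp_apply, map_add, LinearEquiv.coe_coe,
      LinearEquiv.apply_symm_apply] at hn ⊢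
    convert hn using 3
  have h0 : e u = 0 := hQ.1 (e u) (fun n => key n)
  exact e.map_eq_zero_iff.mp h0

/-- an anisotropic non-degenerate quadratic space over a finite field of
characteristic 2 has dimension at most 2; in dimension 2 it is isometric to the norm form
`N(K)`; and the Witt group `WQ(K)` has order 2 (all non-trivial anisotropic spaces are
isometric, and there is one). -/
theorem stmt13 {K : Type*} [Field K] [Fintype K] (h2 : ringChar K = 2)
    {V : Type} [AddCommGroup V] [Module K V] [FiniteDimensional K V]
    (Q : QuadraticForm K V) (hnd : QNondeg Q) (han : ∀ v, Q v = 0 → v = 0) :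
    Module.finrank K V ≤ 2 ∧
    (Module.finrank K V = 2 → ∃ (α : K) (b : Basis (Fin 2) K V),
      Irreducible (Polynomial.X ^ 2 + Polynomial.X + Polynomial.C α) ∧
      Q (b 0) = α ∧ Q (b 1) = 1 ∧ polar Q (b 1) (b 0) = 1) ∧
    ((∀ (V₂ : Type) [AddCommGroup V₂] [Module K V₂] (Q₂ : QuadraticForm K V₂),
      FiniteDimensional K V₂ → QNondeg Q₂ → (∀ v, Q₂ v = 0 → v = 0) →
      Nontrivial V → Nontrivial V₂ → ∃ f : V ≃ₗ[K] V₂, ∀ v, Q₂ (f v) = Q v) ∧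
     ∃ (V₂ : Type) (_ : AddCommGroup V₂), ∃ (_ : Module K V₂) (Q₂ : QuadraticForm K V₂),
      FiniteDimensional K V₂ ∧ QNondeg Q₂ ∧ (∀ v, Q₂ v = 0 → v = 0) ∧ Nontrivial V₂) := by
  haveI : CharP K 2 := ringChar.of_eq h2
  have h2K : (2 : K) = 0 := CharTwo.two_eq_zero
  have hndQ : LinearMap.BilinForm.Nondegenerate Q.polarBilin := hnd
  refine ⟨dim_le_two h2 Q han, ?_, ?_, ?_⟩
  · intro hdim
    obtain ⟨α, b, hα, hb0, hb1, hpb⟩ := exists_normal_basis h2 Q hndQ han hdim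
    refine ⟨α, b, ?_, hb0, hb1, hpb⟩
    have hmon : (X ^ 2 + X + C α : Polynomial K).Monic := by
      have he : (X ^ 2 + X + C α : Polynomial K) = X ^ 2 + (X + C α) := by ring
      rw [he]
      apply Polynomial.monic_X_pow_add
      rw [Polynomial.degree_X_add_C]
      norm_num
    have hdeg : (X ^ 2 + X + C α : Polynomial K).natDegree = 2 := by compute_degree!
    by_contra hirr
    obtain ⟨c₁, c₂, hc, hc'⟩ := (hmon.not_irreducible_iff_exists_add_mul_eq_coeff hdeg).mp hirr
    simp only [Polynomial.coeff_add, Polynomial.coeff_X_pow, Polynomial.coeff_X_zero,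
      Polynomial.coeff_C_zero, Polynomial.coeff_X_one, Polynomial.coeff_C] at hc hc'
    norm_num at hc hc'
    exact hα c₁ (by linear_combination -hc + c₁ * hc' + (c₁ * c₁) * h2K)
  · intro V₂ _ _ Q₂ hfd hnd₂' han₂ hV hV₂
    have hnd₂ : LinearMap.BilinForm.Nondegenerate Q₂.polarBilin := hnd₂'
    have hdV : finrank K V = 2 := by
      have hle := dim_le_two h2 Q han
      have hne := dim_ne_one Q hndQ
      have hpos : 0 < finrank K V := finrank_pos
      omega
    have hdW : finrank K V₂ = 2 := by
      have hle := dim_le_two h2 Q₂ han₂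
      have hne := dim_ne_one Q₂ hnd₂
      have hpos : 0 < finrank K V₂ := finrank_pos
      omega
    obtain ⟨α, b, hα, hb0, hb1, hpb⟩ := exists_normal_basis h2 Q hndQ han hdV
    obtain ⟨β, c, hβ, hc0, hc1, hpc⟩ := exists_normal_basis h2 Q₂ hnd₂ han₂ hdW
    obtain ⟨t, ht⟩ := as_key hα hβ
    set f₂ := (1 : K) • c 0 + t • c 1 with hf₂
    have hQf₂ : Q₂ f₂ = α := by
      rw [hf₂, quad_eval, hc0, hc1, polar_comm, hpc]
      linear_combination ht + β * h2K
    have hpf₂ : polar Q₂ (c 1) f₂ = 1 := by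
      rw [hf₂, one_smul, polar_add_right, polar_smul_right, polar_self_zero,
        smul_zero, hpc, add_zero]
    have hc1ne : c 1 ≠ 0 := fun h => by
      rw [h, QuadraticMap.map_zero] at hc1; exact zero_ne_one hc1
    obtain ⟨d, hd0, hd1⟩ := make_basis hdW Q₂ hc1ne hpf₂
    refine ⟨b.equiv d (Equiv.refl _), fun v => ?_⟩
    have hrep : (b.repr v 0) • b 0 + (b.repr v 1) • b 1 = v := by
      have := b.sum_repr v
      rwa [Fin.sum_univ_two] at this
    have hlv : (b.equiv d (Equiv.refl _)) v
        = (b.repr v 0) • d 0 + (b.repr v 1) • d 1 := by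
      conv_lhs => rw [← hrep]
      simp [map_add, _root_.map_smul, Basis.equiv_apply]
    rw [hlv]
    conv_rhs => rw [← hrep]
    rw [quad_eval, quad_eval, hb0, hb1, hd0, hd1, hQf₂, hc1,
      polar_comm (⇑Q₂) f₂ (c 1), hpf₂, polar_comm (⇑Q) (b 0) (b 1), hpb]
  · obtain ⟨α, hα⟩ := as_exists (K := K)
    haveI hsm : Small.{0} (K × K) :=
      small_of_injective (Fintype.equivFin (K × K)).injective
    let W : Type := Shrink (K × K)
    let e : W ≃ₗ[K] (K × K) := (Shrink.linearEquiv K (K × K))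
    refine ⟨W, inferInstance, inferInstance, (normQ K α).comp (e : W →ₗ[K] (K × K)),
      Module.Finite.equiv (Shrink.linearEquiv K (K × K)).symm, ?_, ?_, ?_⟩
    · show LinearMap.BilinForm.Nondegenerate _
      exact nondeg_comp (normQ K α) (normQ_nondeg α) e
    · intro v hv
      rw [QuadraticMap.comp_apply] at hv
      have := normQ_aniso α hα _ hv
      simpa using congrArg e.symm (by simpa using this : e v = 0)
    · exact e.toEquiv.nontrivial
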